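/- For every integer r ≥ 2 one has τ̃_r ≤ 1/2, i.e., (1 − 2^{1−r})·H_r ≥ 1/2. -/

import Mathlib

open scoped BigOperators

/-- The binary entropy function `h(ξ) = ξ log₂(1/ξ) + (1-ξ) log₂(1/(1-ξ))`. -/
noncomputable def binEnt (x : ℝ) : ℝ :=
  x * Real.logb 2 x⁻¹ + (1 - x) * Real.logb 2 (1 - x)⁻¹

/-- `H_r = (1/(2^r-2)) ∑_{i=1}^{r-1} C(r,i) h(i/r)`. -/
noncomputable def Hent (r : ℕ) : ℝ :=
  (1 / ((2 : ℝ) ^ r - 2)) * ∑ i ∈ Finset.Icc 1 (r - 1), (r.choose i : ℝ) * binEnt ((i : ℝ) / r)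

/-- `τ̃_r = 1 - (1 - 2^{1-r}) H_r`. -/
noncomputable def tauT (r : ℕ) : ℝ := 1 - (1 - (2 : ℝ) ^ ((1 : ℤ) - (r : ℤ))) * Hent r

lemma binEnt_ge {x : ℝ} (h0 : 0 < x) (h1 : x < 1) :
    2 / Real.log 2 * (x * (1 - x)) ≤ binEnt x := by
  have l2 : 0 < Real.log 2 := Real.log_pos (by norm_num)
  have h1' : 0 < 1 - x := by linarith
  have b1 : 1 - x ≤ -Real.log x := by
    have := Real.log_le_sub_one_of_pos h0; linarith
  have b2 : x ≤ -Real.log (1 - x) := by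
    have := Real.log_le_sub_one_of_pos h1'; linarith
  have e1 : Real.logb 2 x⁻¹ = -Real.log x / Real.log 2 := by
    rw [Real.logb, Real.log_inv]
  have e2 : Real.logb 2 (1 - x)⁻¹ = -Real.log (1 - x) / Real.log 2 := by
    rw [Real.logb, Real.log_inv]
  rw [binEnt, e1, e2]
  have key : 2 * (x * (1 - x)) ≤ x * -Real.log x + (1 - x) * -Real.log (1 - x) := by
    nlinarith [mul_le_mul_of_nonneg_left b1 h0.le, mul_le_mul_of_nonneg_left b2 h1'.le]
  calc 2 / Real.log 2 * (x * (1 - x)) = 2 * (x * (1 - x)) / Real.log 2 := by ring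
    _ ≤ (x * -Real.log x + (1 - x) * -Real.log (1 - x)) / Real.log 2 := by
        exact div_le_div_of_nonneg_right key l2.le
    _ = x * (-Real.log x / Real.log 2) + (1 - x) * (-Real.log (1 - x) / Real.log 2) := by ring

lemma choose_id (m j : ℕ) (hj : j ≤ m) :
    (m + 2).choose (j + 1) * ((j + 1) * (m + 1 - j)) = (m + 2) * (m + 1) * m.choose j := by
  have h1 : (m + 2) * (m + 1).choose j = (m + 2).choose (j + 1) * (j + 1) :=
    Nat.add_one_mul_choose_eq (m + 1) j
  have h2 : (m + 1) * m.choose (m - j) = (m + 1).choose (m - j + 1) * (m - j + 1) :=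
    Nat.add_one_mul_choose_eq m (m - j)
  have h3 : m.choose (m - j) = m.choose j := Nat.choose_symm hj
  have h4 : (m + 1).choose (m + 1 - j) = (m + 1).choose j :=
    Nat.choose_symm (by omega)
  have h5 : m - j + 1 = m + 1 - j := by omega
  rw [h3, h5, h4] at h2
  calc (m + 2).choose (j + 1) * ((j + 1) * (m + 1 - j))
      = ((m + 2).choose (j + 1) * (j + 1)) * (m + 1 - j) := by ring
    _ = ((m + 2) * (m + 1).choose j) * (m + 1 - j) := by rw [h1]
    _ = (m + 2) * ((m + 1).choose j * (m + 1 - j)) := by ring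
    _ = (m + 2) * ((m + 1) * m.choose j) := by rw [← h2]
    _ = (m + 2) * (m + 1) * m.choose j := by ring

lemma nat_sum (m : ℕ) :
    ∑ i ∈ Finset.Icc 1 (m + 1), (m + 2).choose i * (i * (m + 2 - i))
      = (m + 2) * (m + 1) * 2 ^ m := by
  rw [← Finset.Ico_add_one_right_eq_Icc, Finset.sum_Ico_eq_sum_range]
  have : ∀ j ∈ Finset.range (m + 1),
      (m + 2).choose (1 + j) * ((1 + j) * (m + 2 - (1 + j)))
        = (m + 2) * (m + 1) * m.choose j := by
    intro j hj
    have hjm : j ≤ m := by simpa using Nat.lt_succ_iff.mp (Finset.mem_range.mp hj)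
    have e1 : 1 + j = j + 1 := by omega
    have e2 : m + 2 - (1 + j) = m + 1 - j := by omega
    rw [e2, e1, choose_id m j hjm]
  have hrange : m + 1 + 1 - 1 = m + 1 := by omega
  rw [hrange, Finset.sum_congr rfl this, ← Finset.mul_sum, Nat.sum_range_choose]

lemma real_sum (m : ℕ) :
    ∑ i ∈ Finset.Icc 1 (m + 1), ((m + 2).choose i : ℝ) * (i * ((m + 2 : ℕ) - (i : ℝ)))
      = (m + 2) * (m + 1) * 2 ^ m := by
  have : ∀ i ∈ Finset.Icc 1 (m + 1),
      ((m + 2).choose i : ℝ) * (i * ((m + 2 : ℕ) - (i : ℝ)))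
        = (((m + 2).choose i * (i * (m + 2 - i)) : ℕ) : ℝ) := by
    intro i hi
    have h2 : i ≤ m + 2 := by
      have := (Finset.mem_Icc.mp hi).2; omega
    push_cast [Nat.cast_sub h2]
    ring
  rw [Finset.sum_congr rfl this, ← Nat.cast_sum, nat_sum]
  push_cast
  ring

lemma sum_ge (r : ℕ) (hr : 4 ≤ r) :
    (2 : ℝ) ^ (r - 1) ≤ ∑ i ∈ Finset.Icc 1 (r - 1), (r.choose i : ℝ) * binEnt ((i : ℝ) / r) := by
  obtain ⟨m, rfl⟩ : ∃ m, r = m + 2 := ⟨r - 2, by omega⟩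
  have hm : 2 ≤ m := by omega
  have hrpos : (0 : ℝ) < (m + 2 : ℕ) := by positivity
  have l2 : 0 < Real.log 2 := Real.log_pos (by norm_num)
  have step1 : ∀ i ∈ Finset.Icc 1 (m + 2 - 1),
      ((m + 2).choose i : ℝ) * (2 / Real.log 2 * ((i / (m + 2 : ℕ)) * (1 - i / (m + 2 : ℕ))))
        ≤ ((m + 2).choose i : ℝ) * binEnt ((i : ℝ) / (m + 2 : ℕ)) := by
    intro i hi
    obtain ⟨hi1, hi2⟩ := Finset.mem_Icc.mp hi
    have hx0 : (0 : ℝ) < (i : ℝ) / (m + 2 : ℕ) := by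
      apply div_pos _ hrpos
      exact_mod_cast Nat.pos_of_ne_zero (by omega)
    have hx1 : (i : ℝ) / (m + 2 : ℕ) < 1 := by
      rw [div_lt_one hrpos]
      exact_mod_cast by omega
    exact mul_le_mul_of_nonneg_left (binEnt_ge hx0 hx1) (by positivity)
  have step2 : ∑ i ∈ Finset.Icc 1 (m + 2 - 1),
      ((m + 2).choose i : ℝ) * (2 / Real.log 2 * ((i / (m + 2 : ℕ)) * (1 - i / (m + 2 : ℕ))))
        = 2 / Real.log 2 * ((m + 1 : ℝ) / (m + 2)) * 2 ^ m := by
    have hns : (m + 2 : ℕ) - 1 = m + 1 := by omega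
    rw [hns]
    have : ∀ i ∈ Finset.Icc 1 (m + 1),
        ((m + 2).choose i : ℝ) * (2 / Real.log 2 * ((i / (m + 2 : ℕ)) * (1 - i / (m + 2 : ℕ))))
          = (2 / Real.log 2 / ((m + 2 : ℕ) : ℝ) ^ 2) *
            (((m + 2).choose i : ℝ) * (i * ((m + 2 : ℕ) - (i : ℝ)))) := by
      intro i hi
      field_simp
    rw [Finset.sum_congr rfl this, ← Finset.mul_sum, real_sum]
    have : ((m + 2 : ℕ) : ℝ) = (m : ℝ) + 2 := by push_cast; ring
    rw [this]
    field_simp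
  have step3 : (2 : ℝ) ^ (m + 2 - 1) ≤ 2 / Real.log 2 * ((m + 1 : ℝ) / (m + 2)) * 2 ^ m := by
    have hns : m + 2 - 1 = m + 1 := by omega
    rw [hns, pow_succ]
    have hlog : Real.log 2 < 0.6931471808 := Real.log_two_lt_d9
    have hmr : (2 : ℝ) ≤ (m : ℝ) := by exact_mod_cast hm
    have hp : (0 : ℝ) < (2 : ℝ) ^ m := by positivity
    have key : 2 ≤ 2 / Real.log 2 * ((m + 1 : ℝ) / (m + 2)) := by
      rw [div_mul_div_comm, le_div_iff₀ (by positivity)]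
      nlinarith
    nlinarith
  calc (2 : ℝ) ^ (m + 2 - 1) ≤ _ := step3
    _ = ∑ i ∈ Finset.Icc 1 (m + 2 - 1), ((m + 2).choose i : ℝ) *
          (2 / Real.log 2 * ((i / (m + 2 : ℕ)) * (1 - i / (m + 2 : ℕ)))) := step2.symm
    _ ≤ _ := Finset.sum_le_sum step1

lemma final_of_sum (r : ℕ) (hr : 2 ≤ r)
    (hS : (2 : ℝ) ^ (r - 1) ≤ ∑ i ∈ Finset.Icc 1 (r - 1), (r.choose i : ℝ) * binEnt ((i : ℝ) / r)) :
    1 / 2 ≤ (1 - (2 : ℝ) ^ ((1 : ℤ) - (r : ℤ))) * Hent r := by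
  set S := ∑ i ∈ Finset.Icc 1 (r - 1), (r.choose i : ℝ) * binEnt ((i : ℝ) / r) with hSdef
  have h2r : (4 : ℝ) ≤ 2 ^ r := by
    calc (4 : ℝ) = 2 ^ 2 := by norm_num
      _ ≤ 2 ^ r := pow_le_pow_right₀ (by norm_num) hr
  have hz : (2 : ℝ) ^ ((1 : ℤ) - (r : ℤ)) = 2 / 2 ^ r := by
    rw [zpow_sub₀ (by norm_num : (2:ℝ) ≠ 0), zpow_one, zpow_natCast]
  have hne : (2 : ℝ) ^ r - 2 ≠ 0 := by linarith
  have hne2 : (2 : ℝ) ^ r ≠ 0 := by positivity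
  have hprod : (1 - (2 : ℝ) ^ ((1 : ℤ) - (r : ℤ))) * Hent r = S / 2 ^ r := by
    rw [hz, Hent, ← hSdef]
    field_simp
  rw [hprod, le_div_iff₀ (by positivity : (0:ℝ) < (2:ℝ)^r)]
  have hpow : (1 : ℝ) / 2 * 2 ^ r = 2 ^ (r - 1) := by
    obtain ⟨k, rfl⟩ : ∃ k, r = k + 1 := ⟨r - 1, by omega⟩
    simp only [pow_succ, Nat.add_sub_cancel]
    ring
  rw [hpow]
  exact hS

lemma binEnt_eq {x : ℝ} : binEnt x = (-(x * Real.log x) - (1 - x) * Real.log (1 - x)) / Real.log 2 := by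
  rw [binEnt, Real.logb, Real.logb, Real.log_inv, Real.log_inv]
  ring

lemma sum_two : (2 : ℝ) ^ (2 - 1) ≤
    ∑ i ∈ Finset.Icc 1 (2 - 1), ((2 : ℕ).choose i : ℝ) * binEnt ((i : ℝ) / (2 : ℕ)) := by
  have h : Finset.Icc 1 (2 - 1) = ({1} : Finset ℕ) := rfl
  rw [h, Finset.sum_singleton]
  have hE : binEnt ((1 : ℝ) / 2) = 1 := by
    rw [binEnt_eq]
    have : Real.log ((1 : ℝ) / 2) = -Real.log 2 := by rw [one_div, Real.log_inv]
    have l2 : Real.log 2 ≠ 0 := ne_of_gt (Real.log_pos (by norm_num))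
    rw [show (1 : ℝ) - 1 / 2 = 1 / 2 by norm_num, this]
    field_simp
    norm_num
  norm_num [hE]

lemma sum_three : (2 : ℝ) ^ (3 - 1) ≤
    ∑ i ∈ Finset.Icc 1 (3 - 1), ((3 : ℕ).choose i : ℝ) * binEnt ((i : ℝ) / (3 : ℕ)) := by
  have h : Finset.Icc 1 (3 - 1) = ({1, 2} : Finset ℕ) := rfl
  rw [h, Finset.sum_insert (by norm_num), Finset.sum_singleton]
  have l2 : 0 < Real.log 2 := Real.log_pos (by norm_num)
  have hlog : 4 * Real.log 2 ≤ 3 * Real.log 3 := by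
    have h1 : Real.log 16 ≤ Real.log 27 :=
      Real.log_le_log (by norm_num) (by norm_num)
    rw [show (16 : ℝ) = 2 ^ 4 by norm_num, show (27 : ℝ) = 3 ^ 3 by norm_num,
      Real.log_pow, Real.log_pow] at h1
    push_cast at h1
    linarith
  have L13 : Real.log ((1 : ℝ) / 3) = -Real.log 3 := by rw [one_div, Real.log_inv]
  have L23 : Real.log ((2 : ℝ) / 3) = Real.log 2 - Real.log 3 :=
    Real.log_div (by norm_num) (by norm_num)
  have e13 : binEnt ((1 : ℝ) / 3) =
      (-(1 / 3 * -Real.log 3) - 2 / 3 * (Real.log 2 - Real.log 3)) / Real.log 2 := by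
    rw [binEnt_eq, show (1 : ℝ) - 1 / 3 = 2 / 3 by norm_num, L13, L23]
  have e23 : binEnt ((2 : ℝ) / 3) =
      (-(2 / 3 * (Real.log 2 - Real.log 3)) - 1 / 3 * -Real.log 3) / Real.log 2 := by
    rw [binEnt_eq, show (1 : ℝ) - 2 / 3 = 1 / 3 by norm_num, L23, L13]
  have c1 : ((1 : ℕ) : ℝ) / ((3 : ℕ) : ℝ) = 1 / 3 := by norm_num
  have c2 : ((2 : ℕ) : ℝ) / ((3 : ℕ) : ℝ) = 2 / 3 := by norm_num
  rw [c1, c2, e13, e23]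
  have hch1 : (((3 : ℕ).choose 1 : ℕ) : ℝ) = 3 := by norm_num
  have hch2 : (((3 : ℕ).choose 2 : ℕ) : ℝ) = 3 := by norm_num
  rw [hch1, hch2]
  have comb : 3 * ((-(1 / 3 * -Real.log 3) - 2 / 3 * (Real.log 2 - Real.log 3)) / Real.log 2) +
      3 * ((-(2 / 3 * (Real.log 2 - Real.log 3)) - 1 / 3 * -Real.log 3) / Real.log 2) =
      (6 * Real.log 3 - 4 * Real.log 2) / Real.log 2 := by ring
  rw [comb, show ((2 : ℝ) ^ (3 - 1) : ℝ) = 4 by norm_num, le_div_iff₀ l2]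
  nlinarith

/-- `τ̃_r ≤ 1/2` for all `r ≥ 2`, i.e. `(1 - 2^{1-r}) H_r ≥ 1/2`. -/
theorem stmt13 : ∀ r : ℕ, 2 ≤ r →
    tauT r ≤ 1 / 2 ∧ 1 / 2 ≤ (1 - (2 : ℝ) ^ ((1 : ℤ) - (r : ℤ))) * Hent r := by
  intro r hr
  have key : 1 / 2 ≤ (1 - (2 : ℝ) ^ ((1 : ℤ) - (r : ℤ))) * Hent r := by
    rcases Nat.lt_or_ge r 4 with h4 | h4
    · interval_cases r
      · exact final_of_sum 2 (by norm_num) sum_two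
      · exact final_of_sum 3 (by norm_num) sum_three
    · exact final_of_sum r hr (sum_ge r h4)
  exact ⟨by rw [tauT]; linarith, key⟩
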